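/- Let f : [0,1]² → ℝ be a bounded, continuous, strictly positive, symmetric density (f(x,y) = f(y,x)), and suppose there exists a continuous strictly positive function h : [0,1] → ℝ such that ∫₀¹ h(x) f(x,y) h(y) dx = 1 for all y ∈ [0,1]. Define the iteration g⁽⁰⁾ ≡ 1 and g⁽ᵗ⁺¹⁾(x) = √( g⁽ᵗ⁾(x) / ∫₀¹ f(x,y) g⁽ᵗ⁾(y) dy ). Then g⁽ᵗ⁾ converges uniformly on [0,1] to h as t → ∞. -/

import Mathlib

open MeasureTheory Filter

lemma cssk_ratio_tendsto (ρ : ℕ → ℝ) (ε : ℝ) (hε : 0 < ε) (hε1 : ε ≤ 1)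
    (hρ1 : ∀ t, 1 ≤ ρ t)
    (hrec : ∀ t, ρ (t+1) ≤ Real.sqrt (ρ t * (ε + (1-ε) * ρ t))) :
    Tendsto ρ atTop (nhds 1) := by
  have hnn : ∀ t, 0 ≤ ρ t := fun t => le_trans zero_le_one (hρ1 t)
  have harg_nn : ∀ t, 0 ≤ ε + (1-ε) * ρ t := by
    intro t
    have : 0 ≤ (1-ε) * ρ t := mul_nonneg (by linarith) (hnn t)
    linarith
  have hanti : Antitone ρ := by
    apply antitone_nat_of_succ_le
    intro t
    refine (hrec t).trans ?_
    have h1 : ε + (1-ε) * ρ t ≤ ρ t := by nlinarith [hρ1 t]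
    calc Real.sqrt (ρ t * (ε + (1-ε) * ρ t)) ≤ Real.sqrt (ρ t * ρ t) :=
          Real.sqrt_le_sqrt (by nlinarith [hnn t])
      _ = ρ t := by rw [Real.sqrt_mul_self (hnn t)]
  have hbdd : BddBelow (Set.range ρ) := ⟨1, by rintro _ ⟨t, rfl⟩; exact hρ1 t⟩
  set L := ⨅ t, ρ t with hL
  have htend : Tendsto ρ atTop (nhds L) := tendsto_atTop_ciInf hanti hbdd
  have hL1 : 1 ≤ L := le_ciInf hρ1
  -- L ≤ sqrt (L * (ε + (1-ε) L))
  have htend' : Tendsto (fun t => ρ (t+1)) atTop (nhds L) :=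
    htend.comp (tendsto_add_atTop_nat 1)
  have htendψ : Tendsto (fun t => Real.sqrt (ρ t * (ε + (1-ε) * ρ t))) atTop
      (nhds (Real.sqrt (L * (ε + (1-ε) * L)))) := by
    apply Tendsto.comp (Real.continuous_sqrt.tendsto _)
    exact htend.mul (tendsto_const_nhds.add (tendsto_const_nhds.mul htend))
  have hkey : L ≤ Real.sqrt (L * (ε + (1-ε) * L)) :=
    le_of_tendsto_of_tendsto' htend' htendψ hrec
  have hsq : L ^ 2 ≤ L * (ε + (1-ε) * L) :=
    (Real.le_sqrt' (by linarith : (0:ℝ) < L)).mp hkey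
  have hL_le : L ≤ 1 := by
    by_contra hc
    push_neg at hc
    nlinarith [mul_pos hε (mul_pos (lt_trans one_pos hc) (sub_pos.mpr hc))]
  have : L = 1 := le_antisymm hL_le hL1
  rwa [this] at htend

lemma cssk_slice_cont (f : ℝ → ℝ → ℝ)
    (hfc : ContinuousOn (fun p : ℝ × ℝ => f p.1 p.2) (Set.Icc 0 1 ×ˢ Set.Icc 0 1))
    {x : ℝ} (hx : x ∈ Set.Icc (0:ℝ) 1) :
    ContinuousOn (fun y => f x y) (Set.Icc 0 1) := by
  have : (fun y => f x y) = (fun p : ℝ × ℝ => f p.1 p.2) ∘ (fun y => (x, y)) := rfl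
  rw [this]
  apply hfc.comp ((continuous_const.prodMk continuous_id).continuousOn)
  intro y hy
  exact Set.mk_mem_prod hx hy

lemma cssk_contF (f : ℝ → ℝ → ℝ)
    (hfc : ContinuousOn (fun p : ℝ × ℝ => f p.1 p.2) (Set.Icc 0 1 ×ˢ Set.Icc 0 1))
    (g : ℝ → ℝ) (hg : ContinuousOn g (Set.Icc 0 1)) :
    ContinuousOn (fun x => ∫ y in (0:ℝ)..1, f x y * g y) (Set.Icc 0 1) := by
  obtain ⟨G, hG⟩ := isCompact_Icc.exists_bound_of_continuousOn hg
  have hG0 : 0 ≤ G := le_trans (norm_nonneg _) (hG 0 (by norm_num))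
  have hint : ∀ x ∈ Set.Icc (0:ℝ) 1,
      IntervalIntegrable (fun y => f x y * g y) volume 0 1 := by
    intro x hx
    exact ((cssk_slice_cont f hfc hx).mul hg).intervalIntegrable_of_Icc zero_le_one
  have hK : IsCompact ((Set.Icc (0:ℝ) 1) ×ˢ (Set.Icc (0:ℝ) 1)) :=
    isCompact_Icc.prod isCompact_Icc
  have hu := hK.uniformContinuousOn_of_continuous hfc
  rw [Metric.uniformContinuousOn_iff] at hu
  rw [Metric.continuousOn_iff]
  intro x hx ε hε
  obtain ⟨δ, hδ, hδ'⟩ := hu (ε / (G + 1)) (by positivity)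
  refine ⟨δ, hδ, fun x' hx' hdist => ?_⟩
  have key : ∀ y ∈ Set.uIoc (0:ℝ) 1, ‖f x' y * g y - f x y * g y‖ ≤ (ε / (G + 1)) * G := by
    intro y hy
    have hy' : y ∈ Set.Icc (0:ℝ) 1 := by
      rw [Set.uIoc_of_le zero_le_one] at hy
      exact Set.Ioc_subset_Icc_self hy
    have hfd : dist (f x' y) (f x y) < ε / (G + 1) := by
      apply hδ' (x', y) (Set.mk_mem_prod hx' hy') (x, y) (Set.mk_mem_prod hx hy')
      rw [Prod.dist_eq]
      exact max_lt hdist (by simpa using hδ)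
    calc ‖f x' y * g y - f x y * g y‖ = ‖f x' y - f x y‖ * ‖g y‖ := by
          rw [← norm_mul]; ring_nf
      _ ≤ (ε / (G + 1)) * G := by
          apply mul_le_mul (le_of_lt (by rwa [Real.dist_eq] at hfd)) (hG y hy')
            (norm_nonneg _) (by positivity)
  have hsub : (∫ y in (0:ℝ)..1, f x' y * g y) - (∫ y in (0:ℝ)..1, f x y * g y)
      = ∫ y in (0:ℝ)..1, (f x' y * g y - f x y * g y) :=
    (intervalIntegral.integral_sub (hint x' hx') (hint x hx)).symm
  have hbound := intervalIntegral.norm_integral_le_of_norm_le_const key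
  rw [Real.dist_eq, ← Real.norm_eq_abs, hsub]
  calc ‖∫ y in (0:ℝ)..1, (f x' y * g y - f x y * g y)‖
      ≤ (ε / (G + 1)) * G * |1 - 0| := hbound
    _ = (ε / (G + 1)) * G := by norm_num
    _ < ε := by
        rw [div_mul_eq_mul_div, div_lt_iff₀ (by positivity)]
        nlinarith

/-- Convergence of the Continuous Symmetric Sinkhorn–Knopp
iteration to the balancing function of a bounded, continuous, strictly
positive, symmetric density on the unit square. -/
theorem cssk_converges (f : ℝ → ℝ → ℝ)
    (hfc : ContinuousOn (fun p : ℝ × ℝ => f p.1 p.2)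
      (Set.Icc 0 1 ×ˢ Set.Icc 0 1))
    (hfb : ∃ B : ℝ, ∀ x ∈ Set.Icc (0:ℝ) 1, ∀ y ∈ Set.Icc (0:ℝ) 1, f x y ≤ B)
    (hfpos : ∀ x ∈ Set.Icc (0:ℝ) 1, ∀ y ∈ Set.Icc (0:ℝ) 1, 0 < f x y)
    (hfsymm : ∀ x y, f x y = f y x)
    (h : ℝ → ℝ) (hhc : ContinuousOn h (Set.Icc 0 1))
    (hhpos : ∀ x ∈ Set.Icc (0:ℝ) 1, 0 < h x)
    (hbal : ∀ y ∈ Set.Icc (0:ℝ) 1, ∫ x in (0:ℝ)..1, h x * f x y * h y = 1)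
    (g : ℕ → ℝ → ℝ) (hg0 : ∀ x, g 0 x = 1)
    (hgit : ∀ t x, g (t + 1) x
      = Real.sqrt (g t x / ∫ y in (0:ℝ)..1, f x y * g t y)) :
    TendstoUniformlyOn (fun t => g t) h atTop (Set.Icc 0 1) := by
  have hI0 : (0:ℝ) ∈ Set.Icc (0:ℝ) 1 := by norm_num
  -- bounds on f
  obtain ⟨B, hB⟩ := hfb
  have hK : IsCompact ((Set.Icc (0:ℝ) 1) ×ˢ (Set.Icc (0:ℝ) 1)) :=
    isCompact_Icc.prod isCompact_Icc
  obtain ⟨p, hp, hpmin⟩ := hK.exists_isMinOn ⟨(0,0), Set.mk_mem_prod hI0 hI0⟩ hfc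
  set b : ℝ := f p.1 p.2 with hbdef
  have hb0 : 0 < b := hfpos p.1 hp.1 p.2 hp.2
  have hbf : ∀ x ∈ Set.Icc (0:ℝ) 1, ∀ y ∈ Set.Icc (0:ℝ) 1, b ≤ f x y := by
    intro x hx y hy
    exact hpmin (Set.mk_mem_prod hx hy)
  have hB0 : 0 < B := lt_of_lt_of_le (hfpos 0 hI0 0 hI0) (hB 0 hI0 0 hI0)
  have hbB : b ≤ B := le_trans (hbf 0 hI0 0 hI0) (hB 0 hI0 0 hI0)
  -- bounds on h
  obtain ⟨xm, hxm, hxmmin⟩ := isCompact_Icc.exists_isMinOn ⟨0, hI0⟩ hhc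
  obtain ⟨xM, hxM, hxMmax⟩ := isCompact_Icc.exists_isMaxOn ⟨0, hI0⟩ hhc
  set hm : ℝ := h xm with hmdef
  set hM : ℝ := h xM with hMdef
  have hm0 : 0 < hm := hhpos xm hxm
  have hmh : ∀ x ∈ Set.Icc (0:ℝ) 1, hm ≤ h x := fun x hx => hxmmin hx
  have hhM : ∀ x ∈ Set.Icc (0:ℝ) 1, h x ≤ hM := fun x hx => hxMmax hx
  have hM0 : 0 < hM := lt_of_lt_of_le hm0 ((hmh xM hxM).trans le_rfl)
  have hmM : hm ≤ hM := (hmh xM hxM)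
  -- the contraction constant
  obtain ⟨ε, hε0, hε1, hεkey⟩ : ∃ ε : ℝ, 0 < ε ∧ ε ≤ 1 ∧
      ∀ x' ∈ Set.Icc (0:ℝ) 1, ∀ y ∈ Set.Icc (0:ℝ) 1,
        ε * (h x' * f x' y) ≤ hm * b := by
    refine ⟨(hm * b) / (hM * B), by positivity, ?_, ?_⟩
    · rw [div_le_one (by positivity)]
      exact mul_le_mul hmM hbB hb0.le hM0.le
    · intro x' hx' y hy
      rw [div_mul_eq_mul_div, div_le_iff₀ (by positivity)]
      exact mul_le_mul_of_nonneg_left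
        (mul_le_mul (hhM x' hx') (hB x' hx' y hy) (hfpos x' hx' y hy).le hM0.le)
        (by positivity)
  -- continuity and positivity of the iterates
  have hFposOf : ∀ t : ℕ, ContinuousOn (g t) (Set.Icc 0 1) →
      (∀ x ∈ Set.Icc (0:ℝ) 1, 0 < g t x) →
      ∀ x ∈ Set.Icc (0:ℝ) 1, 0 < ∫ y in (0:ℝ)..1, f x y * g t y := by
    intro t hc hpos x hx
    obtain ⟨z, hz, hzmin⟩ := isCompact_Icc.exists_isMinOn ⟨0, hI0⟩ hc
    have hgz : 0 < g t z := hpos z hz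
    have hint : IntervalIntegrable (fun y => f x y * g t y) volume 0 1 :=
      ((cssk_slice_cont f hfc hx).mul hc).intervalIntegrable_of_Icc zero_le_one
    have hlow : b * g t z * (1 - 0) ≤ ∫ y in (0:ℝ)..1, f x y * g t y := by
      rw [show b * g t z * (1 - 0) = ∫ _ in (0:ℝ)..1, b * g t z by
        simp [intervalIntegral.integral_const]]
      apply intervalIntegral.integral_mono_on zero_le_one
        (intervalIntegrable_const) hint
      intro y hy
      exact mul_le_mul (hbf x hx y hy) (hzmin hy) hgz.le
        ((hb0.le).trans (hbf x hx y hy))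
    calc (0:ℝ) < b * g t z * (1 - 0) := by nlinarith
      _ ≤ _ := hlow
  have hgood : ∀ t : ℕ, ContinuousOn (g t) (Set.Icc 0 1) ∧
      ∀ x ∈ Set.Icc (0:ℝ) 1, 0 < g t x := by
    intro t
    induction t with
    | zero =>
      constructor
      · exact continuousOn_const.congr (fun x _ => hg0 x)
      · intro x _; rw [hg0]; norm_num
    | succ t ih =>
      have hFc : ContinuousOn (fun x => ∫ y in (0:ℝ)..1, f x y * g t y)
          (Set.Icc 0 1) := cssk_contF f hfc (g t) ih.1
      have hFp := hFposOf t ih.1 ih.2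
      constructor
      · apply ContinuousOn.congr
          (Real.continuous_sqrt.comp_continuousOn
            (ih.1.div hFc (fun x hx => ne_of_gt (hFp x hx))))
        intro x _
        rw [hgit]
        rfl
      · intro x hx
        rw [hgit]
        exact Real.sqrt_pos.mpr (div_pos (ih.2 x hx) (hFp x hx))
  have hFpos : ∀ t : ℕ, ∀ x ∈ Set.Icc (0:ℝ) 1,
      0 < ∫ y in (0:ℝ)..1, f x y * g t y :=
    fun t => hFposOf t (hgood t).1 (hgood t).2
  -- the ratio function and the kernel
  set r : ℕ → ℝ → ℝ := fun t x => g t x / h x with hrdef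
  have hrc : ∀ t, ContinuousOn (r t) (Set.Icc 0 1) := fun t =>
    (hgood t).1.div hhc (fun x hx => ne_of_gt (hhpos x hx))
  have hrpos : ∀ t, ∀ x ∈ Set.Icc (0:ℝ) 1, 0 < r t x := fun t x hx =>
    div_pos ((hgood t).2 x hx) (hhpos x hx)
  set P : ℝ → ℝ → ℝ := fun x y => h x * f x y * h y with hPdef
  have hPc : ∀ x ∈ Set.Icc (0:ℝ) 1, ContinuousOn (fun y => P x y) (Set.Icc 0 1) :=
    fun x hx => (continuousOn_const.mul (cssk_slice_cont f hfc hx)).mul hhc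
  have hPnn : ∀ x ∈ Set.Icc (0:ℝ) 1, ∀ y ∈ Set.Icc (0:ℝ) 1, 0 ≤ P x y := by
    intro x hx y hy
    simp only [hPdef]
    have := hfpos x hx y hy
    have := hhpos x hx
    have := hhpos y hy
    positivity
  have hmarkov : ∀ x ∈ Set.Icc (0:ℝ) 1, ∫ y in (0:ℝ)..1, P x y = 1 := by
    intro x hx
    refine Eq.trans ?_ (hbal x hx)
    apply intervalIntegral.integral_congr
    intro y _
    simp only [hPdef]
    rw [hfsymm x y]
    ring
  have hintP : ∀ x ∈ Set.Icc (0:ℝ) 1,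
      IntervalIntegrable (fun y => P x y) volume 0 1 :=
    fun x hx => (hPc x hx).intervalIntegrable_of_Icc zero_le_one
  have hintPr : ∀ t : ℕ, ∀ x ∈ Set.Icc (0:ℝ) 1,
      IntervalIntegrable (fun y => P x y * r t y) volume 0 1 :=
    fun t x hx => ((hPc x hx).mul (hrc t)).intervalIntegrable_of_Icc zero_le_one
  set Kt : ℕ → ℝ → ℝ := fun t x => ∫ y in (0:ℝ)..1, P x y * r t y with hKdef
  have hKrep : ∀ t : ℕ, ∀ x ∈ Set.Icc (0:ℝ) 1,
      Kt t x = h x * ∫ y in (0:ℝ)..1, f x y * g t y := by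
    intro t x hx
    simp only [hKdef]
    rw [← intervalIntegral.integral_const_mul]
    apply intervalIntegral.integral_congr
    intro y hy
    rw [Set.uIcc_of_le zero_le_one] at hy
    have h0 : h y ≠ 0 := ne_of_gt (hhpos y hy)
    simp only [hPdef, hrdef]
    field_simp
  have hKc : ∀ t, ContinuousOn (Kt t) (Set.Icc 0 1) := by
    intro t
    apply ContinuousOn.congr (hhc.mul (cssk_contF f hfc (g t) (hgood t).1))
    intro x hx
    exact hKrep t x hx
  have hKpos : ∀ t, ∀ x ∈ Set.Icc (0:ℝ) 1, 0 < Kt t x := by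
    intro t x hx
    rw [hKrep t x hx]
    exact mul_pos (hhpos x hx) (hFpos t x hx)
  -- sup and inf of the ratio
  set C : ℕ → ℝ := fun t => sSup (r t '' Set.Icc 0 1) with hCdef
  set c : ℕ → ℝ := fun t => sInf (r t '' Set.Icc 0 1) with hcdef
  have himgc : ∀ t, IsCompact (r t '' Set.Icc 0 1) := fun t =>
    isCompact_Icc.image_of_continuousOn (hrc t)
  have himgne : ∀ t, (r t '' Set.Icc 0 1).Nonempty := fun t =>
    ⟨r t 0, Set.mem_image_of_mem _ hI0⟩
  have hCmem : ∀ t, C t ∈ r t '' Set.Icc 0 1 := fun t =>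
    (himgc t).sSup_mem (himgne t)
  have hcmem : ∀ t, c t ∈ r t '' Set.Icc 0 1 := fun t =>
    (himgc t).sInf_mem (himgne t)
  have hrleC : ∀ t, ∀ x ∈ Set.Icc (0:ℝ) 1, r t x ≤ C t := fun t x hx =>
    le_csSup (himgc t).bddAbove (Set.mem_image_of_mem _ hx)
  have hcler : ∀ t, ∀ x ∈ Set.Icc (0:ℝ) 1, c t ≤ r t x := fun t x hx =>
    csInf_le (himgc t).bddBelow (Set.mem_image_of_mem _ hx)
  have hc0 : ∀ t, 0 < c t := by
    intro t
    obtain ⟨z, hz, hze⟩ := hcmem t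
    rw [← hze]
    exact hrpos t z hz
  have hcC : ∀ t, c t ≤ C t := fun t => (hcler t 0 hI0).trans (hrleC t 0 hI0)
  have hC0 : ∀ t, 0 < C t := fun t => lt_of_lt_of_le (hc0 t) (hcC t)
  -- Markov bounds on Kt
  have hKleC : ∀ t, ∀ x ∈ Set.Icc (0:ℝ) 1, Kt t x ≤ C t := by
    intro t x hx
    have h1 : Kt t x ≤ ∫ y in (0:ℝ)..1, P x y * C t := by
      simp only [hKdef]
      apply intervalIntegral.integral_mono_on zero_le_one (hintPr t x hx)
        ((hintP x hx).mul_const _)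
      intro y hy
      exact mul_le_mul_of_nonneg_left (hrleC t y hy) (hPnn x hx y hy)
    rwa [intervalIntegral.integral_mul_const, hmarkov x hx, one_mul] at h1
  have hcleK : ∀ t, ∀ x ∈ Set.Icc (0:ℝ) 1, c t ≤ Kt t x := by
    intro t x hx
    have h1 : (∫ y in (0:ℝ)..1, P x y * c t) ≤ Kt t x := by
      simp only [hKdef]
      apply intervalIntegral.integral_mono_on zero_le_one
        ((hintP x hx).mul_const _) (hintPr t x hx)
      intro y hy
      exact mul_le_mul_of_nonneg_left (hcler t y hy) (hPnn x hx y hy)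
    rwa [intervalIntegral.integral_mul_const, hmarkov x hx, one_mul] at h1
  -- sup and inf of Kt
  set A : ℕ → ℝ := fun t => sSup (Kt t '' Set.Icc 0 1) with hAdef
  set a : ℕ → ℝ := fun t => sInf (Kt t '' Set.Icc 0 1) with hadef
  have hKimgc : ∀ t, IsCompact (Kt t '' Set.Icc 0 1) := fun t =>
    isCompact_Icc.image_of_continuousOn (hKc t)
  have hKimgne : ∀ t, (Kt t '' Set.Icc 0 1).Nonempty := fun t =>
    ⟨Kt t 0, Set.mem_image_of_mem _ hI0⟩
  have hAmem : ∀ t, A t ∈ Kt t '' Set.Icc 0 1 := fun t =>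
    (hKimgc t).sSup_mem (hKimgne t)
  have hamem : ∀ t, a t ∈ Kt t '' Set.Icc 0 1 := fun t =>
    (hKimgc t).sInf_mem (hKimgne t)
  have hKleA : ∀ t, ∀ x ∈ Set.Icc (0:ℝ) 1, Kt t x ≤ A t := fun t x hx =>
    le_csSup (hKimgc t).bddAbove (Set.mem_image_of_mem _ hx)
  have haleK : ∀ t, ∀ x ∈ Set.Icc (0:ℝ) 1, a t ≤ Kt t x := fun t x hx =>
    csInf_le (hKimgc t).bddBelow (Set.mem_image_of_mem _ hx)
  have hca : ∀ t, c t ≤ a t := by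
    intro t
    obtain ⟨z, hz, hze⟩ := hamem t
    rw [← hze]
    exact hcleK t z hz
  have hAC : ∀ t, A t ≤ C t := by
    intro t
    obtain ⟨z, hz, hze⟩ := hAmem t
    rw [← hze]
    exact hKleC t z hz
  have ha0 : ∀ t, 0 < a t := fun t => lt_of_lt_of_le (hc0 t) (hca t)
  -- contraction
  have hcontr : ∀ t, ∀ x ∈ Set.Icc (0:ℝ) 1, ∀ x' ∈ Set.Icc (0:ℝ) 1,
      Kt t x ≤ (1-ε) * C t + ε * Kt t x' := by
    intro t x hx x' hx'
    have hqnn : ∀ y ∈ Set.Icc (0:ℝ) 1, 0 ≤ P x y - ε * P x' y := by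
      intro y hy
      have h1 : ε * (h x' * f x' y) ≤ hm * b := hεkey x' hx' y hy
      have h2 : hm * b ≤ h x * f x y :=
        mul_le_mul (hmh x hx) (hbf x hx y hy) hb0.le (hm0.le.trans (hmh x hx))
      have h3 : (0:ℝ) ≤ h y := (hhpos y hy).le
      have h4 : (ε * (h x' * f x' y)) * h y ≤ (h x * f x y) * h y :=
        mul_le_mul_of_nonneg_right (h1.trans h2) h3
      simp only [hPdef]
      nlinarith
    have hintq : IntervalIntegrable (fun y => (P x y - ε * P x' y) * r t y)
        volume 0 1 :=
      (((hPc x hx).sub (continuousOn_const.mul (hPc x' hx'))).mul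
        (hrc t)).intervalIntegrable_of_Icc zero_le_one
    have hintq' : IntervalIntegrable (fun y => P x y - ε * P x' y) volume 0 1 :=
      ((hPc x hx).sub (continuousOn_const.mul (hPc x' hx'))).intervalIntegrable_of_Icc
        zero_le_one
    have e1 : Kt t x - ε * Kt t x'
        = ∫ y in (0:ℝ)..1, (P x y - ε * P x' y) * r t y := by
      simp only [hKdef]
      rw [← intervalIntegral.integral_const_mul,
        ← intervalIntegral.integral_sub (hintPr t x hx)
          ((hintPr t x' hx').const_mul ε)]
      apply intervalIntegral.integral_congr
      intro y _
      ring
    have e2 : (∫ y in (0:ℝ)..1, (P x y - ε * P x' y) * r t y)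
        ≤ ∫ y in (0:ℝ)..1, (P x y - ε * P x' y) * C t := by
      apply intervalIntegral.integral_mono_on zero_le_one hintq
        (hintq'.mul_const _)
      intro y hy
      exact mul_le_mul_of_nonneg_left (hrleC t y hy) (hqnn y hy)
    have e3 : (∫ y in (0:ℝ)..1, (P x y - ε * P x' y) * C t) = (1-ε) * C t := by
      rw [intervalIntegral.integral_mul_const,
        intervalIntegral.integral_sub (hintP x hx) ((hintP x' hx').const_mul ε),
        intervalIntegral.integral_const_mul, hmarkov x hx, hmarkov x' hx']
      ring
    linarith [e2.trans_eq e3, e1]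
  have hAcon : ∀ t, A t ≤ (1-ε) * C t + ε * a t := by
    intro t
    obtain ⟨z, hz, hze⟩ := hAmem t
    obtain ⟨w, hw, hwe⟩ := hamem t
    rw [← hze, ← hwe]
    exact hcontr t z hz w hw
  have haA : ∀ t, a t ≤ A t := by
    intro t
    obtain ⟨w, hw, hwe⟩ := hamem t
    rw [← hwe]
    exact hKleA t w hw
  have hA0 : ∀ t, 0 < A t := fun t => lt_of_lt_of_le (ha0 t) (haA t)
  -- the iteration in terms of r
  have hrit : ∀ t : ℕ, ∀ x ∈ Set.Icc (0:ℝ) 1,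
      r (t+1) x = Real.sqrt (r t x / Kt t x) := by
    intro t x hx
    have hF0 : 0 < ∫ y in (0:ℝ)..1, f x y * g t y := hFpos t x hx
    have hh0 : 0 < h x := hhpos x hx
    have hg0' : 0 < g t x := (hgood t).2 x hx
    have harg : r t x / Kt t x
        = (g t x / ∫ y in (0:ℝ)..1, f x y * g t y) * (1 / h x)^2 := by
      rw [hKrep t x hx]
      simp only [hrdef]
      rw [div_div, div_pow, one_pow, div_mul_div_comm, mul_one]
      congr 1
      ring
    rw [harg, Real.sqrt_mul (div_nonneg hg0'.le hF0.le),
      Real.sqrt_sq (by positivity)]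
    simp only [hrdef]
    rw [hgit t x, mul_one_div]
  -- one-step bounds
  have hub : ∀ t, ∀ x ∈ Set.Icc (0:ℝ) 1, r (t+1) x ≤ Real.sqrt (C t / a t) := by
    intro t x hx
    rw [hrit t x hx]
    apply Real.sqrt_le_sqrt
    exact div_le_div₀ (hC0 t).le (hrleC t x hx) (ha0 t) (haleK t x hx)
  have hlb : ∀ t, ∀ x ∈ Set.Icc (0:ℝ) 1, Real.sqrt (c t / A t) ≤ r (t+1) x := by
    intro t x hx
    rw [hrit t x hx]
    apply Real.sqrt_le_sqrt
    exact div_le_div₀ (hrpos t x hx).le (hcler t x hx) (hKpos t x hx)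
      (hKleA t x hx)
  have hCub : ∀ t, C (t+1) ≤ Real.sqrt (C t / a t) := by
    intro t
    obtain ⟨z, hz, hze⟩ := hCmem (t+1)
    rw [← hze]
    exact hub t z hz
  have hclb : ∀ t, Real.sqrt (c t / A t) ≤ c (t+1) := by
    intro t
    obtain ⟨z, hz, hze⟩ := hcmem (t+1)
    rw [← hze]
    exact hlb t z hz
  -- the ratio recursion
  set ρ : ℕ → ℝ := fun t => C t / c t with hρdef
  have hρ1 : ∀ t, 1 ≤ ρ t := fun t => (one_le_div (hc0 t)).mpr (hcC t)
  have hρ0 : ∀ t, 0 < ρ t := fun t => lt_of_lt_of_le one_pos (hρ1 t)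
  have hρrec : ∀ t, ρ (t+1) ≤ Real.sqrt (ρ t * (ε + (1-ε) * ρ t)) := by
    intro t
    have h1 : ρ (t+1) ≤ Real.sqrt (C t / a t) / Real.sqrt (c t / A t) := by
      simp only [hρdef]
      exact div_le_div₀ (Real.sqrt_nonneg _) (hCub t)
        (Real.sqrt_pos.mpr (div_pos (hc0 t) (hA0 t))) (hclb t)
    have h2 : Real.sqrt (C t / a t) / Real.sqrt (c t / A t)
        = Real.sqrt ((C t / a t) / (c t / A t)) :=
      (Real.sqrt_div (div_nonneg (hC0 t).le (ha0 t).le) _).symm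
    have h3 : (C t / a t) / (c t / A t) = (C t * A t) / (a t * c t) := by
      rw [div_div_div_eq]
    have h4 : (C t * A t) / (a t * c t) ≤ ρ t * (ε + (1-ε) * ρ t) := by
      have hrw : ρ t * (ε + (1-ε) * ρ t)
          = (C t * (ε * c t + (1-ε) * C t)) / (c t * c t) := by
        have hcne : c t ≠ 0 := ne_of_gt (hc0 t)
        simp only [hρdef]
        field_simp
      rw [hrw, div_le_div_iff₀ (mul_pos (ha0 t) (hc0 t)) (mul_pos (hc0 t) (hc0 t))]
      have k1 : A t * c t ≤ (ε * c t + (1-ε) * C t) * a t := by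
        nlinarith [mul_le_mul_of_nonneg_right (hAcon t) (hc0 t).le,
          mul_le_mul_of_nonneg_left (hca t)
            (mul_nonneg (sub_nonneg.mpr hε1) (hC0 t).le)]
      nlinarith [mul_le_mul_of_nonneg_left k1 (mul_nonneg (hC0 t).le (hc0 t).le)]
    calc ρ (t+1) ≤ Real.sqrt (C t / a t) / Real.sqrt (c t / A t) := h1
      _ = Real.sqrt ((C t / a t) / (c t / A t)) := h2
      _ = Real.sqrt ((C t * A t) / (a t * c t)) := by rw [h3]
      _ ≤ Real.sqrt (ρ t * (ε + (1-ε) * ρ t)) := Real.sqrt_le_sqrt h4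
  have hρlim : Tendsto ρ atTop (nhds 1) :=
    cssk_ratio_tendsto ρ ε hε0 hε1 hρ1 hρrec
  -- the uniform bound
  have hsρ1 : ∀ t, 1 ≤ Real.sqrt (ρ t) := fun t =>
    (Real.le_sqrt' one_pos).mpr (by simpa using hρ1 t)
  have hbound : ∀ t, ∀ x ∈ Set.Icc (0:ℝ) 1,
      |h x - g (t+1) x| ≤ hM * (Real.sqrt (ρ t) - 1) := by
    intro t x hx
    have hupp : r (t+1) x ≤ Real.sqrt (ρ t) := by
      refine (hub t x hx).trans (Real.sqrt_le_sqrt ?_)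
      simp only [hρdef]
      exact div_le_div_of_nonneg_left (hC0 t).le (hc0 t) (hca t)
    have hlow : 1 / Real.sqrt (ρ t) ≤ r (t+1) x := by
      refine le_trans ?_ (hlb t x hx)
      have e : (1:ℝ) / Real.sqrt (ρ t) = Real.sqrt (c t / C t) := by
        rw [one_div, ← Real.sqrt_inv]
        congr 1
        simp only [hρdef]
        rw [inv_div]
      rw [e]
      apply Real.sqrt_le_sqrt
      exact div_le_div_of_nonneg_left (hc0 t).le (hA0 t) (hAC t)
    have hs1 : 1 ≤ Real.sqrt (ρ t) := hsρ1 t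
    have hs0 : 0 < Real.sqrt (ρ t) := lt_of_lt_of_le one_pos hs1
    have habs : |r (t+1) x - 1| ≤ Real.sqrt (ρ t) - 1 := by
      rw [abs_le]
      constructor
      · have h5 : 2 - Real.sqrt (ρ t) ≤ 1 / Real.sqrt (ρ t) := by
          rw [le_div_iff₀ hs0]
          nlinarith
        linarith
      · linarith
    have hgr : g (t+1) x = h x * r (t+1) x := by
      simp only [hrdef]
      rw [← mul_div_assoc, mul_div_cancel_left₀ _ (ne_of_gt (hhpos x hx))]
    rw [hgr, show h x - h x * r (t+1) x = h x * (1 - r (t+1) x) by ring,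
      abs_mul, abs_of_nonneg (hhpos x hx).le, abs_sub_comm]
    exact mul_le_mul (hhM x hx) habs (abs_nonneg _) hM0.le
  -- conclusion
  have hDlim : Tendsto (fun t => hM * (Real.sqrt (ρ t) - 1)) atTop (nhds 0) := by
    have hs : Tendsto (fun t => Real.sqrt (ρ t)) atTop (nhds 1) := by
      have := (Real.continuous_sqrt.tendsto 1).comp hρlim
      simpa [Function.comp_def] using this
    have h2 : Tendsto (fun t => hM * (Real.sqrt (ρ t) - 1)) atTop
        (nhds (hM * (1 - 1))) :=
      tendsto_const_nhds.mul (hs.sub tendsto_const_nhds)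
    simpa using h2
  rw [Metric.tendstoUniformlyOn_iff]
  intro δ hδ
  have hev : ∀ᶠ t in atTop, hM * (Real.sqrt (ρ t) - 1) < δ :=
    hDlim.eventually_lt_const hδ
  obtain ⟨N, hN⟩ := eventually_atTop.mp hev
  rw [eventually_atTop]
  refine ⟨N+1, fun t ht x hx => ?_⟩
  obtain ⟨s', rfl⟩ : ∃ s', t = s' + 1 :=
    ⟨t - 1, (Nat.succ_pred_eq_of_pos (lt_of_lt_of_le (Nat.succ_pos N) ht)).symm⟩
  rw [Real.dist_eq]
  calc |h x - g (s'+1) x| ≤ hM * (Real.sqrt (ρ s') - 1) := hbound s' x hx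
    _ < δ := hN s' (by omega)
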